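/- Let E be a directed graph and let H ⊆ E⁰ be a saturated hereditary subset such that every saturated hereditary subset K of E⁰ satisfies K ⊆ H or K = E⁰. If α is a cycle in E all of whose vertices lie in E⁰ ∖ H, then for every vertex x ∈ E⁰ one has x ≥ s(α) if and only if x ∉ H, where s(α) is the base point of α. -/

import Mathlib

/-- In a directed graph with edge set `E`, vertex set `V`, and source and range
maps `s r : E → V`, the vertex `v` reaches the vertex `w` (written `v ≥ w`) if
there is a directed path (possibly of length zero) from `v` to `w`. -/
def Reaches {V E : Type*} (s r : E → V) : V → V → Prop :=
  Relation.ReflTransGen (fun v w => ∃ e : E, s e = v ∧ r e = w)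

/-- A set `H` of vertices is hereditary if `v ∈ H` and `v ≥ w` imply `w ∈ H`. -/
def Hereditary {V E : Type*} (s r : E → V) (H : Set V) : Prop :=
  ∀ ⦃v w : V⦄, v ∈ H → Reaches s r v w → w ∈ H

/-- A vertex `v` is regular if `0 < |s⁻¹(v)| < ∞`. -/
def RegularVertex {V E : Type*} (s : E → V) (v : V) : Prop :=
  {e : E | s e = v}.Nonempty ∧ {e : E | s e = v}.Finite

/-- A set `H` of vertices is saturated if every regular vertex all of whose
outgoing edges end in `H` belongs to `H`. -/
def Saturated {V E : Type*} (s r : E → V) (H : Set V) : Prop :=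
  ∀ v : V, RegularVertex s v → (∀ e : E, s e = v → r e ∈ H) → v ∈ H

/-- Let `H` be a saturated hereditary set of vertices such that every saturated
hereditary set `K` satisfies `K ⊆ H` or `K = E⁰`.  If `α` is a cycle (given by
edges `α i`, `i : Fin (n+1)`, with `r (α i) = s (α (i+1))` cyclically) all of
whose vertices lie outside `H`, then a vertex `x` reaches the base point
`s (α 0)` if and only if `x ∉ H`. -/
theorem reaches_cycle_iff_not_mem {V E : Type*} (s r : E → V) (H : Set V)
    (hH : Hereditary s r H ∧ Saturated s r H)
    (hmax : ∀ K : Set V, Hereditary s r K → Saturated s r K →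
      K ⊆ H ∨ K = Set.univ)
    (n : ℕ) (α : Fin (n + 1) → E)
    (hchain : ∀ i : Fin (n + 1), r (α i) = s (α (i + 1)))
    (hout : ∀ i : Fin (n + 1), s (α i) ∉ H) :
    ∀ x : V, Reaches s r x (s (α 0)) ↔ x ∉ H := by
  
  -- every vertex of the cycle reaches the base point
  open Fin.CommRing in
  have hstep : ∀ (i : Fin (n + 1)) (k : ℕ),
      Reaches s r (s (α i)) (s (α (i + (k : Fin (n + 1))))) := by
    intro i k
    induction k with
    | zero => rw [Nat.cast_zero, add_zero]; exact Relation.ReflTransGen.refl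
    | succ k ih =>
      have : ((k + 1 : ℕ) : Fin (n + 1)) = (k : Fin (n + 1)) + 1 := by
        push_cast; ring
      rw [this, ← add_assoc]
      exact ih.tail ⟨α (i + (k : Fin (n + 1))), rfl, (hchain _).symm ▸ rfl⟩
  open Fin.CommRing in
  have hcyc : ∀ i : Fin (n + 1), Reaches s r (s (α i)) (s (α 0)) := by
    intro i
    have h := hstep i (n + 1 - i.val)
    have : i + ((n + 1 - i.val : ℕ) : Fin (n + 1)) = 0 := by
      ext
      simp [Fin.add_def, Fin.val_natCast, Nat.mod_eq_of_lt (Nat.sub_lt_succ _ _)]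
    rwa [this] at h
  set K : Set V := {x | ¬ Reaches s r x (s (α 0))} with hK
  have hKher : Hereditary s r K := by
    intro v w hv hvw hw
    exact hv (hvw.trans hw)
  have hKsat : Saturated s r K := by
    intro v hreg hall hv
    rcases hv.cases_head with heq | ⟨c, ⟨e, he, hre⟩, hc⟩
    · -- v = s (α 0); then r (α 0) reaches back
      have h0 : r (α 0) ∈ K := hall (α 0) heq.symm
      exact h0 ((hchain 0) ▸ hcyc (0 + 1))
    · exact hall e he (hre ▸ hc)
  rcases hmax K hKher hKsat with hsub | huniv
  · intro x
    constructor
    · intro hx hxH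
      exact hout 0 (hH.1 hxH hx)
    · intro hxH
      by_contra hx
      exact hxH (hsub hx)
  · exfalso
    have : s (α 0) ∈ K := huniv ▸ Set.mem_univ _
    exact this Relation.ReflTransGen.refl
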